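/- If y solves x y² y'' + x y' − y = 0 with x y' − y ≠ 0, then setting r = y/x and α = 1/(x y' − y), the function α, viewed as a function of r along the solution, satisfies r² dα/dr − α² = 0. -/

import Mathlib

/-- If `y` solves `x y² y'' + x y' − y = 0` with `x y' − y ≠ 0` (and `x ≠ 0`),
then, setting `r = y/x` and `α = 1/(x y' − y)`, the function `α` viewed as a function
of `r` along the solution satisfies `r² dα/dr − α² = 0`; via the chain rule this reads
`r² · dα/dx = α² · dr/dx`. -/
theorem stmt_8 (y y' y'' : ℝ → ℝ)
    (hy : ∀ t, HasDerivAt y (y' t) t)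
    (hy' : ∀ t, HasDerivAt y' (y'' t) t)
    (x : ℝ) (hx : x ≠ 0)
    (hode : x * (y x) ^ 2 * y'' x + x * y' x - y x = 0)
    (hnz : x * y' x - y x ≠ 0) :
    (y x / x) ^ 2 * deriv (fun t : ℝ => 1 / (t * y' t - y t)) x
      = (1 / (x * y' x - y x)) ^ 2 * deriv (fun t : ℝ => y t / t) x := by
  have h1 : HasDerivAt (fun t => t * y' t - y t) (1 * y' x + x * y'' x - y' x) x :=
    ((hasDerivAt_id x).mul (hy' x)).sub (hy x)
  have hα : HasDerivAt (fun t : ℝ => 1 / (t * y' t - y t))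
      ((0 * (x * y' x - y x) - 1 * (1 * y' x + x * y'' x - y' x)) / (x * y' x - y x) ^ 2) x :=
    (hasDerivAt_const x (1:ℝ)).div h1 hnz
  have hr : HasDerivAt (fun t : ℝ => y t / t) ((y' x * x - y x * 1) / x ^ 2) x :=
    (hy x).div (hasDerivAt_id x) hx
  rw [hα.deriv, hr.deriv]
  field_simp
  linear_combination (-1) * hode
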